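/- Let F be a curvature-like map on a (2n+2)-dimensional Lorentz g.f.f-vector space with s = 2 and ξ_1 timelike, satisfying F(x,ξ_α,y,v) = 0, F(ξ_α,x,ξ_β,y) = ε_α ε_β g(x,y), F(ξ_α,x,ξ_β,ξ_γ) = 0 and F(ξ_1,ξ_2,ξ_1,ξ_2) = 0 for x,y,v ∈ Im φ. If F(u,y,u,y) = 0 for every u = ξ_1 + x₁ with x₁ ∈ Im φ unit and every y ∈ u^⊥ ∩ Im φ, then F(x,y,v,z) = g(S_*(x,y)v, z) - g(S*(x,y)v, z) for all x,y,v,z. -/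

import Mathlib

open RealInnerProductSpace

noncomputable section

variable {W : Type*} [NormedAddCommGroup W] [InnerProductSpace ℝ W]

/-- The Lorentz metric on `V = Im φ ⊕ span{ξ₁,ξ₂}`, modeled as `W × ℝ × ℝ` with
`Im φ = W` (where `g` is positive definite), `ξ₁ = (0,1,0)` timelike and
`ξ₂ = (0,0,1)` spacelike. -/
def lg (v w : W × ℝ × ℝ) : ℝ := ⟪v.1, w.1⟫ - v.2.1 * w.2.1 + v.2.2 * w.2.2

/-- The characteristic vectors `ξ₁ = (0,1,0)` (timelike) and `ξ₂ = (0,0,1)` (spacelike). -/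
def xiv : Fin 2 → W × ℝ × ℝ := ![(0, 1, 0), (0, 0, 1)]

/-- The causal characters `ε₁ = -1`, `ε₂ = 1`. -/
def eps : Fin 2 → ℝ := ![-1, 1]

/-- `η̃ = ε₁ η¹ + ε₂ η² = -η¹ + η²`. -/
def etat (v : W × ℝ × ℝ) : ℝ := -v.2.1 + v.2.2

/-- `ξ̃ = ξ₁ + ξ₂`. -/
def xit : W × ℝ × ℝ := (0, 1, 1)

/-- `S*(x,y)v = η̃(y)η̃(v)x - η̃(x)η̃(v)y + g(y,v)η̃(x)ξ̃ - g(x,v)η̃(y)ξ̃`. -/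
def Sstar (x y v : W × ℝ × ℝ) : W × ℝ × ℝ :=
  (etat y * etat v) • x - (etat x * etat v) • y
    + (lg y v * etat x) • xit - (lg x v * etat y) • xit

/-- `S_*(x,y)v = -g(φy,φv)φ²x + g(φx,φv)φ²y`. -/
def Sund (φ : (W × ℝ × ℝ) →ₗ[ℝ] (W × ℝ × ℝ)) (x y v : W × ℝ × ℝ) : W × ℝ × ℝ :=
  -(lg (φ y) (φ v)) • (φ (φ x)) + (lg (φ x) (φ v)) • (φ (φ y))


/-- Auxiliary polarization lemma: a map with curvature symmetries whose
"sectional" values all vanish is identically zero. -/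
lemma curvature_like_aux_zero {E : Type*} [AddCommMonoid E] (G : E → E → E → E → ℝ)
    (hadd1 : ∀ x x' y v z, G (x + x') y v z = G x y v z + G x' y v z)
    (hadd2 : ∀ x y y' v z, G x (y + y') v z = G x y v z + G x y' v z)
    (hpair : ∀ x y v z, G v z x y = G x y v z)
    (h2' : ∀ x y v z, G x y v z = -G x y z v)
    (hbianchi : ∀ x y v z, G x y v z + G x v z y + G x z y v = 0)
    (hsec : ∀ x y, G x y x y = 0) :
    ∀ x y v z, G x y v z = 0 := by
  have hsec3 : ∀ x y z, G x y z y = 0 := by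
    intro x y z
    have e1 : G (x + z) y (x + z) y = 0 := hsec _ _
    have e2 := hadd1 x z y (x + z) y
    have e3 := hpair x y (x + z) y
    have e4 := hadd1 x z y x y
    have e5 := hpair z y (x + z) y
    have e6 := hadd1 x z y z y
    have e7 := hpair x y z y
    have s1 := hsec x y
    have s2 := hsec z y
    linarith
  have haux : ∀ x y z w, G x y z w = -G x w z y := by
    intro x y z w
    have e1 : G x (y + w) z (y + w) = 0 := hsec3 _ _ _
    have e2 := hadd2 x y w z (y + w)
    have e3 := hpair x y z (y + w)
    have e4 := hadd2 z y w x y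
    have e5 := hpair x w z (y + w)
    have e6 := hadd2 z y w x w
    have s1 : G z y x y = 0 := hsec3 z y x
    have s2 : G z w x w = 0 := hsec3 z w x
    have p1 := hpair x y z w
    have p2 := hpair x w z y
    linarith
  intro x y v z
  have b := hbianchi x y v z
  have e1a := haux x v z y
  have e1b := h2' x y v z
  have e2a := haux x z y v
  have e2b := h2' x v y z
  linarith

/-- Auxiliary: the restriction of `F` to `Im φ` is the constant-curvature tensor. -/
lemma curvature_like_aux_FW
    (F : (W × ℝ × ℝ) →ₗ[ℝ] (W × ℝ × ℝ) →ₗ[ℝ] (W × ℝ × ℝ) →ₗ[ℝ] (W × ℝ × ℝ) →ₗ[ℝ] ℝ)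
    (halt : ∀ x y v z, F y x v z = -F x y v z)
    (hpair : ∀ x y v z, F v z x y = F x y v z)
    (hbianchi : ∀ x y v z, F x y v z + F x v z y + F x z y v = 0)
    (h1 : ∀ (x y v : W) (α : Fin 2),
      F ((x, 0, 0) : W × ℝ × ℝ) (xiv α) ((y, 0, 0) : W × ℝ × ℝ)
        ((v, 0, 0) : W × ℝ × ℝ) = 0)
    (h2 : ∀ (x y : W) (α β : Fin 2),
      F (xiv α) ((x, 0, 0) : W × ℝ × ℝ) (xiv β) ((y, 0, 0) : W × ℝ × ℝ) =
        eps α * eps β * ⟪x, y⟫)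
    (hdeg : ∀ x₁ : W, ⟪x₁, x₁⟫ = 1 → ∀ y : W, ⟪y, x₁⟫ = 0 →
      F ((x₁, 1, 0) : W × ℝ × ℝ) ((y, 0, 0) : W × ℝ × ℝ)
        ((x₁, 1, 0) : W × ℝ × ℝ) ((y, 0, 0) : W × ℝ × ℝ) = 0) :
    ∀ x y v z : W, F ((x,0,0) : W × ℝ × ℝ) (y,0,0) (v,0,0) (z,0,0)
      = ⟪y, v⟫ * ⟪x, z⟫ - ⟪x, v⟫ * ⟪y, z⟫ := by
  have hF2 : ∀ x y v z, F x y v z = -F x y z v := by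
    intro x y v z
    rw [← hpair x y v z, halt, hpair]
  have hfirst : ∀ a c d, F a a c d = 0 := by
    intro a c d; have := halt a a c d; linarith
  have hsecond : ∀ a b c, F a b c c = 0 := by
    intro a b c; have := hF2 a b c c; linarith
  -- the degenerate sectional values on Im φ
  have hsecW : ∀ x y : W, F ((x,0,0) : W × ℝ × ℝ) (y,0,0) (x,0,0) (y,0,0)
      = ⟪x, y⟫ * ⟪x, y⟫ - ⟪x, x⟫ * ⟪y, y⟫ := by
    intro x y
    by_cases hx : x = 0
    · subst hx
      have : ((0,0,0) : W × ℝ × ℝ) = 0 := rfl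
      rw [this]
      simp
    · obtain ⟨c, hc⟩ : ∃ c : ℝ, c = ‖x‖ := ⟨_, rfl⟩
      have hc0 : c ≠ 0 := by simp [hc, hx]
      obtain ⟨xh, hxh⟩ : ∃ w : W, w = c⁻¹ • x := ⟨_, rfl⟩
      have hxx : ⟪x, x⟫ = c * c := by rw [hc]; exact real_inner_self_eq_norm_mul_norm x
      have hunit : ⟪xh, xh⟫ = 1 := by
        rw [hxh, real_inner_smul_left, real_inner_smul_right, hxx]
        field_simp
      obtain ⟨d, hd⟩ : ∃ d : ℝ, d = ⟪y, xh⟫ := ⟨_, rfl⟩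
      obtain ⟨y', hy'⟩ : ∃ w : W, w = y - d • xh := ⟨_, rfl⟩
      have hperp : ⟪y', xh⟫ = 0 := by
        rw [hy', inner_sub_left, real_inner_smul_left, hunit, ← hd]
        ring
      have E0 := hdeg xh hunit y' hperp
      have hdecomp : ((xh, 1, 0) : W × ℝ × ℝ) = (xh, 0, 0) + xiv 0 := by
        show _ = _ + ((0,1,0) : W × ℝ × ℝ)
        simp [Prod.ext_iff]
      rw [hdecomp] at E0
      simp only [map_add, LinearMap.add_apply] at E0
      have t1 : F ((xh,0,0) : W × ℝ × ℝ) (y',0,0) (xiv 0) (y',0,0) = 0 := by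
        rw [hpair, halt, h1, neg_zero]
      have t2 : F (xiv 0) ((y',0,0) : W × ℝ × ℝ) ((xh,0,0)) (y',0,0) = 0 := by
        rw [halt, h1, neg_zero]
      have t3 : F (xiv 0) ((y',0,0) : W × ℝ × ℝ) (xiv 0) (y',0,0) = ⟪y', y'⟫ := by
        rw [h2]; norm_num [eps]
      rw [t1, t2, t3] at E0
      have Fhat : F ((xh,0,0) : W × ℝ × ℝ) (y',0,0) (xh,0,0) (y',0,0) = -⟪y', y'⟫ := by
        linarith
      have hxdec : ((x,0,0) : W × ℝ × ℝ) = c • ((xh,0,0) : W × ℝ × ℝ) := by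
        rw [hxh, Prod.smul_mk]
        simp [smul_smul, hc0]
      have hydec : ((y,0,0) : W × ℝ × ℝ)
          = ((y',0,0) : W × ℝ × ℝ) + d • ((xh,0,0) : W × ℝ × ℝ) := by
        rw [hy', Prod.smul_mk, Prod.mk_add_mk]
        simp [Prod.ext_iff]
      have key : F ((x,0,0) : W × ℝ × ℝ) (y,0,0) (x,0,0) (y,0,0) = -(c*c) * ⟪y', y'⟫ := by
        rw [hxdec, hydec]
        simp only [map_add, map_smul, LinearMap.add_apply, LinearMap.smul_apply,
          smul_eq_mul]
        rw [Fhat]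
        have z1 : F ((xh,0,0) : W × ℝ × ℝ) (y',0,0) (xh,0,0) (xh,0,0) = 0 := hsecond _ _ _
        have z2 : F ((xh,0,0) : W × ℝ × ℝ) (xh,0,0) (xh,0,0) (y',0,0) = 0 := hfirst _ _ _
        have z3 : F ((xh,0,0) : W × ℝ × ℝ) (xh,0,0) (xh,0,0) (xh,0,0) = 0 := hfirst _ _ _
        rw [z1, z2, z3]
        ring
      rw [key]
      have hxxh : ⟪x, xh⟫ = c := by
        rw [hxh, real_inner_smul_right, hxx]; field_simp
      have hxy' : ⟪x, y'⟫ = 0 := by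
        have h := hperp
        rw [real_inner_comm] at h
        rw [hxh, real_inner_smul_left] at h
        have := (mul_eq_zero.mp h).resolve_left (inv_ne_zero hc0)
        rwa [real_inner_comm] at this ⊢
      have hyx : ⟪x, y⟫ = c * d := by
        have hyd : y = y' + d • xh := by rw [hy']; abel
        rw [hyd, inner_add_right, hxy', real_inner_smul_right, hxxh]
        ring
      have hyy : ⟪y, y⟫ = ⟪y', y'⟫ + d * d := by
        have hyd : y = y' + d • xh := by rw [hy']; abel
        have hxhy' : ⟪xh, y'⟫ = 0 := by rw [real_inner_comm]; exact hperp
        rw [hyd, inner_add_left, inner_add_right, inner_add_right,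
          real_inner_smul_left, real_inner_smul_left, real_inner_smul_right,
          real_inner_smul_right, hperp, hxhy', hunit]
        ring
      rw [hyx, hyy, hxx]
      ring
  -- F restricted to Im φ via the polarization lemma
  have FW : ∀ x y v z : W, F ((x,0,0) : W × ℝ × ℝ) (y,0,0) (v,0,0) (z,0,0)
      = ⟪y, v⟫ * ⟪x, z⟫ - ⟪x, v⟫ * ⟪y, z⟫ := by
    have main := curvature_like_aux_zero
      (fun x y v z : W => F ((x,0,0) : W × ℝ × ℝ) (y,0,0) (v,0,0) (z,0,0)
        - (⟪y, v⟫ * ⟪x, z⟫ - ⟪x, v⟫ * ⟪y, z⟫))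
      (by
        intro x x' y v z
        try dsimp only
        have e : ((x + x', 0, 0) : W × ℝ × ℝ) = (x,0,0) + (x',0,0) := by
          simp [Prod.ext_iff]
        simp only [e, map_add, LinearMap.add_apply, inner_add_left]
        ring)
      (by
        intro x y y' v z
        try dsimp only
        have e : ((y + y', 0, 0) : W × ℝ × ℝ) = (y,0,0) + (y',0,0) := by
          simp [Prod.ext_iff]
        simp only [e, map_add, LinearMap.add_apply, inner_add_left]
        ring)
      (by
        intro x y v z
        try dsimp only
        rw [hpair ((x,0,0) : W × ℝ × ℝ) (y,0,0) (v,0,0) (z,0,0)]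
        rw [real_inner_comm v x, real_inner_comm z y, real_inner_comm z x,
          real_inner_comm v y]
        ring)
      (by
        intro x y v z
        try dsimp only
        rw [hF2 ((x,0,0) : W × ℝ × ℝ) (y,0,0) (v,0,0) (z,0,0)]
        ring)
      (by
        intro x y v z
        try dsimp only
        have b := hbianchi ((x,0,0) : W × ℝ × ℝ) (y,0,0) (v,0,0) (z,0,0)
        rw [real_inner_comm v y, real_inner_comm z y, real_inner_comm z v]
        linarith [b])
      (by
        intro x y
        try dsimp only
        rw [hsecW, real_inner_comm y x]
        ring)
    intro x y v z
    have h := main x y v z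
    try dsimp only at h
    linarith
  exact FW

/-- Auxiliary: final assembly by multilinearity. -/
lemma curvature_like_aux_assemble
    (φ : (W × ℝ × ℝ) →ₗ[ℝ] (W × ℝ × ℝ))
    (hφ2 : ∀ v : W × ℝ × ℝ, φ (φ v) = (-v.1, 0, 0))
    (hφg : ∀ a b : W × ℝ × ℝ, lg (φ a) (φ b) = ⟪a.1, b.1⟫)
    (F : (W × ℝ × ℝ) →ₗ[ℝ] (W × ℝ × ℝ) →ₗ[ℝ] (W × ℝ × ℝ) →ₗ[ℝ] (W × ℝ × ℝ) →ₗ[ℝ] ℝ)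
    (halt : ∀ x y v z, F y x v z = -F x y v z)
    (hpair : ∀ x y v z, F v z x y = F x y v z)
    (hbianchi : ∀ x y v z, F x y v z + F x v z y + F x z y v = 0)
    (h1 : ∀ (x y v : W) (α : Fin 2),
      F ((x, 0, 0) : W × ℝ × ℝ) (xiv α) ((y, 0, 0) : W × ℝ × ℝ)
        ((v, 0, 0) : W × ℝ × ℝ) = 0)
    (h2 : ∀ (x y : W) (α β : Fin 2),
      F (xiv α) ((x, 0, 0) : W × ℝ × ℝ) (xiv β) ((y, 0, 0) : W × ℝ × ℝ) =
        eps α * eps β * ⟪x, y⟫)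
    (h3 : ∀ (x : W) (α β γ : Fin 2),
      F (xiv α) ((x, 0, 0) : W × ℝ × ℝ) (xiv β) (xiv γ) = 0)
    (h4 : F (xiv 0) (xiv 1) (xiv 0) (xiv 1) = 0)
    (FW : ∀ x y v z : W, F ((x,0,0) : W × ℝ × ℝ) (y,0,0) (v,0,0) (z,0,0)
      = ⟪y, v⟫ * ⟪x, z⟫ - ⟪x, v⟫ * ⟪y, z⟫) :
    ∀ x y v z : W × ℝ × ℝ,
      F x y v z = lg (Sund φ x y v) z - lg (Sstar x y v) z := by
  -- derived symmetries
  have hF2 : ∀ x y v z, F x y v z = -F x y z v := by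
    intro x y v z
    rw [← hpair x y v z, halt, hpair]
  have hfirst : ∀ a c d, F a a c d = 0 := by
    intro a c d; have := halt a a c d; linarith
  have hsecond : ∀ a b c, F a b c c = 0 := by
    intro a b c; have := hF2 a b c c; linarith
  -- values of F on pure arguments
  have hv1 : ∀ (x y v : W) (α : Fin 2), F (xiv α) (x,0,0) (y,0,0) (v,0,0) = 0 := by
    intro x y v α; rw [halt, h1, neg_zero]
  have hv3 : ∀ (x y v : W) (α : Fin 2), F (x,0,0) (y,0,0) (xiv α) (v,0,0) = 0 := by
    intro x y v α; rw [← hpair]; exact hv1 _ _ _ _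
  have hv4 : ∀ (x y v : W) (α : Fin 2), F (x,0,0) (y,0,0) (v,0,0) (xiv α) = 0 := by
    intro x y v α; rw [hF2, hv3, neg_zero]
  have hv14 : ∀ (x y : W) (α β : Fin 2),
      F (xiv α) (x,0,0) (y,0,0) (xiv β) = -(eps α * eps β * ⟪x, y⟫) := by
    intro x y α β; rw [hF2, h2]
  have hv23 : ∀ (x y : W) (α β : Fin 2),
      F (x,0,0) (xiv α) (xiv β) (y,0,0) = -(eps α * eps β * ⟪x, y⟫) := by
    intro x y α β; rw [halt, h2]
  have hv24 : ∀ (x y : W) (α β : Fin 2),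
      F (x,0,0) (xiv α) (y,0,0) (xiv β) = eps α * eps β * ⟪x, y⟫ := by
    intro x y α β; rw [hF2, hv23]; ring
  have hv34 : ∀ (x y : W) (α β : Fin 2), F (x,0,0) (y,0,0) (xiv α) (xiv β) = 0 := by
    intro x y α β
    have b := hbianchi ((x,0,0) : W × ℝ × ℝ) (y,0,0) (xiv α) (xiv β)
    rw [hv23, hv24] at b
    have : eps β * eps α * ⟪x, y⟫ = eps α * eps β * ⟪x, y⟫ := by ring
    linarith
  have hv12 : ∀ (x y : W) (α β : Fin 2), F (xiv α) (xiv β) (x,0,0) (y,0,0) = 0 := by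
    intro x y α β; rw [← hpair]; exact hv34 _ _ _ _
  have hv3a : ∀ (x : W) (α β γ : Fin 2), F (x,0,0) (xiv α) (xiv β) (xiv γ) = 0 := by
    intro x α β γ; rw [halt, h3, neg_zero]
  have hv3d : ∀ (x : W) (α β γ : Fin 2), F (xiv α) (xiv β) (xiv γ) (x,0,0) = 0 := by
    intro x α β γ; rw [← hpair]; exact h3 _ _ _ _
  have hv3c : ∀ (x : W) (α β γ : Fin 2), F (xiv α) (xiv β) (x,0,0) (xiv γ) = 0 := by
    intro x α β γ; rw [hF2, hv3d, neg_zero]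
  have hv4xi : ∀ α β γ δ : Fin 2, F (xiv α) (xiv β) (xiv γ) (xiv δ) = 0 := by
    intro α β γ δ
    have e : ∀ a : Fin 2, a = 0 ∨ a = 1 := by decide
    rcases e α with rfl | rfl <;> rcases e β with rfl | rfl <;>
      rcases e γ with rfl | rfl <;> rcases e δ with rfl | rfl <;>
      first
        | exact hfirst _ _ _
        | exact hsecond _ _ _
        | linarith [h4, halt ((xiv 0 : W × ℝ × ℝ)) (xiv 1) (xiv 0) (xiv 1),
            halt ((xiv 0 : W × ℝ × ℝ)) (xiv 1) (xiv 1) (xiv 0),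
            hF2 ((xiv 0 : W × ℝ × ℝ)) (xiv 1) (xiv 0) (xiv 1)]
  -- final assembly by multilinearity
  intro x y v z
  have hSund : lg (Sund φ x y v) z
      = ⟪y.1, v.1⟫ * ⟪x.1, z.1⟫ - ⟪x.1, v.1⟫ * ⟪y.1, z.1⟫ := by
    simp only [Sund, hφg, hφ2]
    simp only [lg, Prod.fst_add, Prod.snd_add, Prod.smul_fst,
      Prod.smul_snd, smul_eq_mul, inner_add_left, real_inner_smul_left, inner_neg_left]
    ring
  have hSstar : lg (Sstar x y v) z
      = (etat y * etat v) * lg x z - (etat x * etat v) * lg y z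
        + (lg y v * etat x) * etat z - (lg x v * etat y) * etat z := by
    simp only [Sstar, xit, lg, etat, Prod.fst_add, Prod.snd_add, Prod.fst_sub,
      Prod.snd_sub, Prod.smul_fst, Prod.smul_snd, smul_eq_mul, inner_add_left,
      inner_sub_left, real_inner_smul_left, inner_zero_left]
    ring
  rw [hSund, hSstar]
  have hdw : ∀ w : W × ℝ × ℝ,
      w = ((w.1, 0, 0) : W × ℝ × ℝ) + w.2.1 • xiv 0 + w.2.2 • xiv 1 := by
    intro w
    show w = _ + _ • ((0,1,0) : W × ℝ × ℝ) + _ • ((0,0,1) : W × ℝ × ℝ)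
    simp [Prod.ext_iff]
  conv_lhs => rw [hdw x, hdw y, hdw v, hdw z]
  simp only [map_add, map_smul, LinearMap.add_apply, LinearMap.smul_apply, smul_eq_mul]
  simp only [FW, hv1, h1, hv3, hv4, h2, hv14, hv23, hv24, hv34, hv12, h3, hv3a, hv3c,
    hv3d, hv4xi]
  simp only [eps, lg, etat, Matrix.cons_val_zero, Matrix.cons_val_one, Matrix.head_cons]
  ring


/-- Lemma 5.6, a ⇒ b: Let `F` be a curvature-like map on a
`(2n+2)`-dimensional Lorentz g.f.f-vector space with `s = 2` and `ξ₁` timelike,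
satisfying conditions (9): `F(x,ξ_α,y,v) = 0`, `F(ξ_α,x,ξ_β,y) = ε_α ε_β g(x,y)`,
`F(ξ_α,x,ξ_β,ξ_γ) = 0` and `F(ξ₁,ξ₂,ξ₁,ξ₂) = 0` for `x,y,v ∈ Im φ`.  If
`F(u,y,u,y) = 0` for every `u = ξ₁ + x₁` with `x₁ ∈ Im φ` unit and every
`y ∈ u^⊥ ∩ Im φ`, then `F(x,y,v,z) = g(S_*(x,y)v, z) - g(S*(x,y)v, z)` for all
`x,y,v,z`. -/
theorem curvature_like_eq_Sund_sub_Sstar [FiniteDimensional ℝ W]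
    (n : ℕ) (hdim : Module.finrank ℝ W = 2 * n)
    (φ : (W × ℝ × ℝ) →ₗ[ℝ] (W × ℝ × ℝ))
    (hφIm : ∀ v : W × ℝ × ℝ, (φ v).2 = (0, 0))
    (hφ2 : ∀ v : W × ℝ × ℝ, φ (φ v) = (-v.1, 0, 0))
    (hφg : ∀ a b : W × ℝ × ℝ, lg (φ a) (φ b) = ⟪a.1, b.1⟫)
    (F : (W × ℝ × ℝ) →ₗ[ℝ] (W × ℝ × ℝ) →ₗ[ℝ] (W × ℝ × ℝ) →ₗ[ℝ] (W × ℝ × ℝ) →ₗ[ℝ] ℝ)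
    (halt : ∀ x y v z, F y x v z = -F x y v z)
    (hpair : ∀ x y v z, F v z x y = F x y v z)
    (hbianchi : ∀ x y v z, F x y v z + F x v z y + F x z y v = 0)
    (h1 : ∀ (x y v : W) (α : Fin 2),
      F ((x, 0, 0) : W × ℝ × ℝ) (xiv α) ((y, 0, 0) : W × ℝ × ℝ)
        ((v, 0, 0) : W × ℝ × ℝ) = 0)
    (h2 : ∀ (x y : W) (α β : Fin 2),
      F (xiv α) ((x, 0, 0) : W × ℝ × ℝ) (xiv β) ((y, 0, 0) : W × ℝ × ℝ) =
        eps α * eps β * ⟪x, y⟫)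
    (h3 : ∀ (x : W) (α β γ : Fin 2),
      F (xiv α) ((x, 0, 0) : W × ℝ × ℝ) (xiv β) (xiv γ) = 0)
    (h4 : F (xiv 0) (xiv 1) (xiv 0) (xiv 1) = 0)
    (hdeg : ∀ x₁ : W, ⟪x₁, x₁⟫ = 1 → ∀ y : W, ⟪y, x₁⟫ = 0 →
      F ((x₁, 1, 0) : W × ℝ × ℝ) ((y, 0, 0) : W × ℝ × ℝ)
        ((x₁, 1, 0) : W × ℝ × ℝ) ((y, 0, 0) : W × ℝ × ℝ) = 0) :
    ∀ x y v z : W × ℝ × ℝ,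
      F x y v z = lg (Sund φ x y v) z - lg (Sstar x y v) z := by
  exact curvature_like_aux_assemble φ hφ2 hφg F halt hpair hbianchi h1 h2 h3 h4
    (curvature_like_aux_FW F halt hpair hbianchi h1 h2 hdeg)
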